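/- arXiv:2508.18846 — 3 statements merged into one kernel-verified Lean document; each statement's English description precedes it below -/
import Mathlib

section
/- Suppose δ > 0 and let β_V be a super-Poincaré rate for μ_V and β_W a super-Poincaré rate for ν_W. Then the sticky-reflected Dirichlet form satisfies the super Poincaré inequality: for every r > 0 and every test function f, μ(f²) ≤ r·E_δ(f) + max( β_V(r)/θ , β_W(δr)/(1-θ) ) · μ(|f|)². -/
open MeasureTheory Real

noncomputable section

def Hs (d : ℕ) : Set (EuclideanSpace ℝ (Fin (d + 1))) := {x | 0 < x 0}

def iota (d : ℕ) (y : EuclideanSpace ℝ (Fin d)) : EuclideanSpace ℝ (Fin (d + 1)) :=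
  WithLp.toLp 2 (Fin.cons (0 : ℝ) (WithLp.ofLp y) : Fin (d + 1) → ℝ)

def IsTest (d : ℕ) (f : EuclideanSpace ℝ (Fin (d + 1)) → ℝ) : Prop :=
  ContDiff ℝ 1 f ∧ (∃ C, ∀ x, |f x| ≤ C) ∧ ∃ C, ∀ x, ‖gradient f x‖ ≤ C

def IsTestB (d : ℕ) (g : EuclideanSpace ℝ (Fin d) → ℝ) : Prop :=
  ContDiff ℝ 1 g ∧ (∃ C, ∀ y, |g y| ≤ C) ∧ ∃ C, ∀ y, ‖gradient g y‖ ≤ C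

def ZV (d : ℕ) (V : EuclideanSpace ℝ (Fin (d + 1)) → ℝ) : ℝ :=
  ∫ x in Hs d, Real.exp (V x)

def ZW (d : ℕ) (W : EuclideanSpace ℝ (Fin d) → ℝ) : ℝ :=
  ∫ y, Real.exp (W y)

/-- mean of `φ` under `μ_V`. -/
def muV (d : ℕ) (V : EuclideanSpace ℝ (Fin (d + 1)) → ℝ)
    (φ : EuclideanSpace ℝ (Fin (d + 1)) → ℝ) : ℝ :=
  (ZV d V)⁻¹ * ∫ x in Hs d, φ x * Real.exp (V x)

/-- mean of `ψ` under `ν_W`. -/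
def nuW (d : ℕ) (W : EuclideanSpace ℝ (Fin d) → ℝ)
    (ψ : EuclideanSpace ℝ (Fin d) → ℝ) : ℝ :=
  (ZW d W)⁻¹ * ∫ y, ψ y * Real.exp (W y)

def theta (d : ℕ) (V : EuclideanSpace ℝ (Fin (d + 1)) → ℝ)
    (W : EuclideanSpace ℝ (Fin d) → ℝ) (γ : ℝ) : ℝ :=
  γ * ZW d W / (γ * ZW d W + ZV d V)

/-- mean of `φ` under `μ = θ μ_V + (1-θ) μ_W^∂`. -/
def muM (d : ℕ) (V : EuclideanSpace ℝ (Fin (d + 1)) → ℝ)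
    (W : EuclideanSpace ℝ (Fin d) → ℝ) (γ : ℝ)
    (φ : EuclideanSpace ℝ (Fin (d + 1)) → ℝ) : ℝ :=
  theta d V W γ * muV d V φ + (1 - theta d V W γ) * nuW d W (fun y => φ (iota d y))

def gV (d : ℕ) (V f : EuclideanSpace ℝ (Fin (d + 1)) → ℝ) : ℝ :=
  muV d V (fun x => ‖gradient f x‖ ^ 2)

def gW (d : ℕ) (W : EuclideanSpace ℝ (Fin d) → ℝ)
    (f : EuclideanSpace ℝ (Fin (d + 1)) → ℝ) : ℝ :=
  nuW d W (fun y => ‖gradient (fun z => f (iota d z)) y‖ ^ 2)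

def Edir (d : ℕ) (V : EuclideanSpace ℝ (Fin (d + 1)) → ℝ)
    (W : EuclideanSpace ℝ (Fin d) → ℝ) (γ δ : ℝ)
    (f : EuclideanSpace ℝ (Fin (d + 1)) → ℝ) : ℝ :=
  theta d V W γ * gV d V f + (1 - theta d V W γ) * δ * gW d W f

def supNorm (d : ℕ) (f : EuclideanSpace ℝ (Fin (d + 1)) → ℝ) : ℝ := ⨆ x, |f x|

def lap (d : ℕ) (h : EuclideanSpace ℝ (Fin (d + 1)) → ℝ)
    (x : EuclideanSpace ℝ (Fin (d + 1))) : ℝ :=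
  ∑ i : Fin (d + 1),
    fderiv ℝ (fun z => fderiv ℝ h z (EuclideanSpace.single i 1)) x (EuclideanSpace.single i 1)

def LV (d : ℕ) (V h : EuclideanSpace ℝ (Fin (d + 1)) → ℝ)
    (x : EuclideanSpace ℝ (Fin (d + 1))) : ℝ :=
  lap d h x + (inner ℝ (gradient V x) (gradient h x) : ℝ)

def M0 (d : ℕ) (V : EuclideanSpace ℝ (Fin (d + 1)) → ℝ)
    (W : EuclideanSpace ℝ (Fin d) → ℝ) : ℝ :=
  ⨆ y, max (W y - V (iota d y)) 0

def C0 (d : ℕ) (V : EuclideanSpace ℝ (Fin (d + 1)) → ℝ)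
    (W : EuclideanSpace ℝ (Fin d) → ℝ) : ℝ :=
  (ZV d V / ZW d W) * Real.exp (M0 d V W)

def C1 (d : ℕ) (V h : EuclideanSpace ℝ (Fin (d + 1)) → ℝ) : ℝ :=
  Real.sqrt (muV d V (fun x => (max (-(LV d V h x)) 0) ^ 2))

def C2 (d : ℕ) (V h : EuclideanSpace ℝ (Fin (d + 1)) → ℝ) : ℝ :=
  Real.sqrt (muV d V (fun x => ‖gradient h x‖ ^ 2))

/-- Assumption (A). -/
def AssumptionA (d : ℕ) (V : EuclideanSpace ℝ (Fin (d + 1)) → ℝ)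
    (W : EuclideanSpace ℝ (Fin d) → ℝ) (h : EuclideanSpace ℝ (Fin (d + 1)) → ℝ) : Prop :=
  ContDiff ℝ 2 h ∧
  (∀ y, fderiv ℝ h (iota d y) (EuclideanSpace.single 0 1) = 1) ∧
  BddAbove (Set.range fun y => max (W y - V (iota d y)) 0) ∧
  IntegrableOn (fun x => (max (-(LV d V h x)) 0) ^ 2 * Real.exp (V x)) (Hs d) ∧
  IntegrableOn (fun x => ‖gradient h x‖ ^ 2 * Real.exp (V x)) (Hs d) ∧
  ∀ φ : EuclideanSpace ℝ (Fin (d + 1)) → ℝ, (∃ K, LipschitzWith K φ) →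
    (∃ C, ∀ x, |φ x| ≤ C) →
    (∫ y, φ (iota d y) * Real.exp (V (iota d y))) =
      - ∫ x in Hs d,
          (φ x * LV d V h x + (inner ℝ (gradient φ x) (gradient h x) : ℝ)) * Real.exp (V x)

/-- Assumption (B) with given sup constants. -/
def AssumptionB (d : ℕ) (V : EuclideanSpace ℝ (Fin (d + 1)) → ℝ)
    (W : EuclideanSpace ℝ (Fin d) → ℝ) (h : EuclideanSpace ℝ (Fin (d + 1)) → ℝ)
    (Cb1 Cb2 : ℝ) : Prop :=
  ContDiff ℝ 2 h ∧
  (∀ y, fderiv ℝ h (iota d y) (EuclideanSpace.single 0 1) = 1) ∧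
  BddAbove (Set.range fun y => max (W y - V (iota d y)) 0) ∧
  IsLUB ((fun x => max (-(LV d V h x)) 0) '' {x : EuclideanSpace ℝ (Fin (d + 1)) | 0 ≤ x 0}) Cb1 ∧
  IsLUB ((fun x => ‖gradient h x‖) '' {x : EuclideanSpace ℝ (Fin (d + 1)) | 0 ≤ x 0}) Cb2 ∧
  ∀ φ : EuclideanSpace ℝ (Fin (d + 1)) → ℝ, (∃ K, LipschitzWith K φ) →
    (∃ C, ∀ x, |φ x| ≤ C) →
    (∫ y, φ (iota d y) * Real.exp (V (iota d y))) =
      - ∫ x in Hs d,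
          (φ x * LV d V h x + (inner ℝ (gradient φ x) (gradient h x) : ℝ)) * Real.exp (V x)


/-- `iota` as a linear isometry. -/
def iotaLI (d : ℕ) : EuclideanSpace ℝ (Fin d) →ₗᵢ[ℝ] EuclideanSpace ℝ (Fin (d + 1)) where
  toFun := iota d
  map_add' y z := by
    ext i
    refine Fin.cases ?_ (fun j => ?_) i <;>
      simp [iota, PiLp.add_apply]
  map_smul' c y := by
    ext i
    refine Fin.cases ?_ (fun j => ?_) i <;>
      simp [iota, PiLp.smul_apply]
  norm_map' y := by
    rw [EuclideanSpace.norm_eq, EuclideanSpace.norm_eq]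
    congr 1
    rw [Fin.sum_univ_succ]
    simp [iota]

lemma norm_gradient_eq {E : Type*} [NormedAddCommGroup E] [InnerProductSpace ℝ E]
    [CompleteSpace E] (f : E → ℝ) (x : E) : ‖gradient f x‖ = ‖fderiv ℝ f x‖ := by
  rw [gradient, LinearIsometryEquiv.norm_map]

lemma isOpen_Hs (d : ℕ) : IsOpen (Hs d) := by
  have : Continuous fun x : EuclideanSpace ℝ (Fin (d + 1)) => x 0 :=
    (EuclideanSpace.proj (0 : Fin (d + 1))).continuous
  exact isOpen_lt continuous_const this

/-- super Poincaré inequality for the sticky-reflected Dirichlet form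
with boundary diffusion (`δ > 0`). -/
theorem sticky_super_poincare_boundary_diffusion
    (d : ℕ) (hd : 1 ≤ d)
    (V : EuclideanSpace ℝ (Fin (d + 1)) → ℝ) (W : EuclideanSpace ℝ (Fin d) → ℝ)
    (hV : ContDiff ℝ 1 V) (hW : Continuous W)
    (hZV : IntegrableOn (fun x => Real.exp (V x)) (Hs d))
    (hZW : Integrable fun y => Real.exp (W y))
    (γ : ℝ) (hγ : 0 < γ) (δ : ℝ) (hδ : 0 < δ)
    (βV βW : ℝ → ℝ) (hβVpos : ∀ r, 0 < r → 0 < βV r) (hβWpos : ∀ r, 0 < r → 0 < βW r)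
    (hβV : ∀ r, 0 < r → ∀ f, IsTest d f →
      muV d V (fun x => f x ^ 2) ≤ r * gV d V f + βV r * muV d V (fun x => |f x|) ^ 2)
    (hβW : ∀ r, 0 < r → ∀ g, IsTestB d g →
      nuW d W (fun y => g y ^ 2) ≤ r * nuW d W (fun y => ‖gradient g y‖ ^ 2)
        + βW r * nuW d W (fun y => |g y|) ^ 2) :
    ∀ r, 0 < r → ∀ f, IsTest d f →
      muM d V W γ (fun x => f x ^ 2) ≤ r * Edir d V W γ δ f
        + max (βV r / theta d V W γ) (βW (δ * r) / (1 - theta d V W γ))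
          * muM d V W γ (fun x => |f x|) ^ 2 := by
  intro r hr f hf
  obtain ⟨hf1, ⟨Cf, hCf⟩, ⟨Cg, hCg⟩⟩ := hf
  -- positivity of the normalisation constants
  have hZWpos : 0 < ZW d W := integral_exp_pos hZW
  have hHsne : (volume (Hs d)) ≠ 0 := by
    refine ((isOpen_Hs d).measure_pos volume ⟨EuclideanSpace.single 0 1, ?_⟩).ne'
    simp [Hs]
  haveI : NeZero (volume.restrict (Hs d)) := ⟨by
    simpa [Measure.restrict_eq_zero] using hHsne⟩
  have hZVpos : 0 < ZV d V := integral_exp_pos hZV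
  set θ := theta d V W γ with hθdef
  have hθpos : 0 < θ := by
    rw [hθdef, theta]
    positivity
  have hθlt : θ < 1 := by
    rw [hθdef, theta, div_lt_one (by positivity)]
    linarith
  have h1θ : 0 < 1 - θ := by linarith
  -- the boundary restriction of f is a test function
  set g : EuclideanSpace ℝ (Fin d) → ℝ := fun y => f (iota d y) with hgdef
  have hJ : (fun y => f (iota d y)) = f ∘ (iotaLI d).toContinuousLinearMap := rfl
  have hgc : ContDiff ℝ 1 g := by
    rw [hgdef, hJ]
    exact hf1.comp (iotaLI d).toContinuousLinearMap.contDiff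
  have hgtest : IsTestB d g := by
    refine ⟨hgc, ⟨Cf, fun y => hCf _⟩, ⟨Cg, fun y => ?_⟩⟩
    have hdf : DifferentiableAt ℝ f ((iotaLI d).toContinuousLinearMap y) :=
      hf1.differentiable (by norm_num) _
    have hcomp : fderiv ℝ g y =
        (fderiv ℝ f (iota d y)).comp (iotaLI d).toContinuousLinearMap := by
      rw [hgdef, hJ, fderiv_comp y hdf (iotaLI d).toContinuousLinearMap.differentiableAt,
        ContinuousLinearMap.fderiv]
      rfl
    have hnJ : ‖(iotaLI d).toContinuousLinearMap‖ ≤ 1 := by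
      refine ContinuousLinearMap.opNorm_le_bound _ zero_le_one fun y => ?_
      rw [one_mul]
      exact le_of_eq ((iotaLI d).norm_map y)
    calc ‖gradient g y‖ = ‖fderiv ℝ g y‖ := norm_gradient_eq g y
      _ ≤ ‖fderiv ℝ f (iota d y)‖ * ‖(iotaLI d).toContinuousLinearMap‖ := by
          rw [hcomp]; exact ContinuousLinearMap.opNorm_comp_le _ _
      _ ≤ ‖fderiv ℝ f (iota d y)‖ * 1 := by
          exact mul_le_mul_of_nonneg_left hnJ (norm_nonneg _)
      _ = ‖gradient f (iota d y)‖ := by rw [mul_one, norm_gradient_eq]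
      _ ≤ Cg := hCg _
  -- apply the two super-Poincaré inequalities
  have hA := hβV r hr f ⟨hf1, ⟨Cf, hCf⟩, ⟨Cg, hCg⟩⟩
  have hB := hβW (δ * r) (by positivity) g hgtest
  -- nonnegativity of the means of |f|
  have ha : 0 ≤ muV d V fun x => |f x| := by
    rw [muV]
    refine mul_nonneg (by positivity) (integral_nonneg fun x => ?_)
    positivity
  have hb : 0 ≤ nuW d W fun y => |g y| := by
    rw [nuW]
    refine mul_nonneg (by positivity) (integral_nonneg fun y => ?_)
    positivity
  -- abbreviations
  set A := muV d V fun x => f x ^ 2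
  set B := nuW d W fun y => g y ^ 2
  set a := muV d V fun x => |f x| with hadef
  set b := nuW d W fun y => |g y| with hbdef
  set M := max (βV r / θ) (βW (δ * r) / (1 - θ)) with hMdef
  have hM1 : βV r ≤ M * θ := by
    rw [← div_le_iff₀ hθpos]
    exact le_max_left _ _
  have hM2 : βW (δ * r) ≤ M * (1 - θ) := by
    rw [← div_le_iff₀ h1θ]
    exact le_max_right _ _
  have hMpos : 0 < M := lt_of_lt_of_le (div_pos (hβVpos r hr) hθpos) (le_max_left _ _)
  have hgoal : θ * A + (1 - θ) * B ≤
      r * (θ * gV d V f + (1 - θ) * δ * gW d W f) + M * (θ * a + (1 - θ) * b) ^ 2 := by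
    have h2 : θ * A ≤ θ * (r * gV d V f + βV r * a ^ 2) :=
      mul_le_mul_of_nonneg_left hA hθpos.le
    have h3 : (1 - θ) * B ≤ (1 - θ) * (δ * r * gW d W f + βW (δ * r) * b ^ 2) :=
      mul_le_mul_of_nonneg_left hB h1θ.le
    nlinarith [mul_nonneg (mul_nonneg (mul_nonneg hMpos.le hθpos.le) h1θ.le)
        (mul_nonneg ha hb), sq_nonneg a, sq_nonneg b,
      mul_le_mul_of_nonneg_right hM1 (mul_nonneg hθpos.le (sq_nonneg a)),
      mul_le_mul_of_nonneg_right hM2 (mul_nonneg h1θ.le (sq_nonneg b))]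
  -- assemble
  have e1 : muM d V W γ (fun x => f x ^ 2) = θ * A + (1 - θ) * B := rfl
  have e2 : Edir d V W γ δ f = θ * gV d V f + (1 - θ) * δ * gW d W f := rfl
  have e3 : muM d V W γ (fun x => |f x|) = θ * a + (1 - θ) * b := rfl
  rw [e1, e2, e3]
  exact hgoal

end
end

section
/- Let f : X → ℝ be measurable with f² integrable with respect to both μ₁ and μ₂, let r > 0 and let a, b ≥ 0 and β₁, β₂ > 0 satisfy μ₁(f²) ≤ r·a + β₁·μ₁(|f|)² and μ₂(f²) ≤ r·b + β₂·μ₂(|f|)². Then μ(f²) ≤ r·(θa + (1-θ)b) + max( β₁/θ , β₂/(1-θ) )·μ(|f|)². -/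
open MeasureTheory

/-- combining super Poincaré bounds under a convex combination of
probability measures. -/
theorem super_poincare_convex_combination
    {X : Type*} [MeasurableSpace X] (μ₁ μ₂ : Measure X)
    [IsProbabilityMeasure μ₁] [IsProbabilityMeasure μ₂]
    (θ : ℝ) (hθ : θ ∈ Set.Ioo (0 : ℝ) 1)
    (f : X → ℝ) (hf : Measurable f)
    (h1 : Integrable (fun x => f x ^ 2) μ₁) (h2 : Integrable (fun x => f x ^ 2) μ₂)
    (r a b β₁ β₂ : ℝ) (hr : 0 < r) (ha : 0 ≤ a) (hb : 0 ≤ b)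
    (hβ₁ : 0 < β₁) (hβ₂ : 0 < β₂)
    (H1 : ∫ x, f x ^ 2 ∂μ₁ ≤ r * a + β₁ * (∫ x, |f x| ∂μ₁) ^ 2)
    (H2 : ∫ x, f x ^ 2 ∂μ₂ ≤ r * b + β₂ * (∫ x, |f x| ∂μ₂) ^ 2) :
    ∫ x, f x ^ 2 ∂(ENNReal.ofReal θ • μ₁ + ENNReal.ofReal (1 - θ) • μ₂) ≤
      r * (θ * a + (1 - θ) * b)
        + max (β₁ / θ) (β₂ / (1 - θ))
          * (∫ x, |f x| ∂(ENNReal.ofReal θ • μ₁ + ENNReal.ofReal (1 - θ) • μ₂)) ^ 2 := by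
  obtain ⟨hθ0, hθ1⟩ := hθ
  have hθ1' : (0:ℝ) < 1 - θ := by linarith
  -- integrability of |f|
  have hm1 : MemLp f 2 μ₁ := by
    rw [memLp_two_iff_integrable_sq hf.aestronglyMeasurable]
    exact h1
  have hm2 : MemLp f 2 μ₂ := by
    rw [memLp_two_iff_integrable_sq hf.aestronglyMeasurable]
    exact h2
  have hi1 : Integrable f μ₁ := hm1.integrable (by norm_num)
  have hi2 : Integrable f μ₂ := hm2.integrable (by norm_num)
  have hia1 : Integrable (fun x => |f x|) μ₁ := hi1.abs
  have hia2 : Integrable (fun x => |f x|) μ₂ := hi2.abs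
  have hsq1 : Integrable (fun x => f x ^ 2) (ENNReal.ofReal θ • μ₁) :=
    h1.smul_measure ENNReal.ofReal_ne_top
  have hsq2 : Integrable (fun x => f x ^ 2) (ENNReal.ofReal (1 - θ) • μ₂) :=
    h2.smul_measure ENNReal.ofReal_ne_top
  have habs1 : Integrable (fun x => |f x|) (ENNReal.ofReal θ • μ₁) :=
    hia1.smul_measure ENNReal.ofReal_ne_top
  have habs2 : Integrable (fun x => |f x|) (ENNReal.ofReal (1 - θ) • μ₂) :=
    hia2.smul_measure ENNReal.ofReal_ne_top
  have ht1 : (ENNReal.ofReal θ).toReal = θ := ENNReal.toReal_ofReal hθ0.le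
  have ht2 : (ENNReal.ofReal (1 - θ)).toReal = 1 - θ := ENNReal.toReal_ofReal hθ1'.le
  have e1 : ∫ x, f x ^ 2 ∂(ENNReal.ofReal θ • μ₁ + ENNReal.ofReal (1 - θ) • μ₂)
      = θ * ∫ x, f x ^ 2 ∂μ₁ + (1 - θ) * ∫ x, f x ^ 2 ∂μ₂ := by
    rw [integral_add_measure hsq1 hsq2, integral_smul_measure, integral_smul_measure,
      ht1, ht2, smul_eq_mul, smul_eq_mul]
  have e2 : ∫ x, |f x| ∂(ENNReal.ofReal θ • μ₁ + ENNReal.ofReal (1 - θ) • μ₂)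
      = θ * ∫ x, |f x| ∂μ₁ + (1 - θ) * ∫ x, |f x| ∂μ₂ := by
    rw [integral_add_measure habs1 habs2, integral_smul_measure, integral_smul_measure,
      ht1, ht2, smul_eq_mul, smul_eq_mul]
  rw [e1, e2]
  set A := ∫ x, |f x| ∂μ₁ with hA
  set B := ∫ x, |f x| ∂μ₂ with hB
  have hA0 : 0 ≤ A := integral_nonneg fun x => abs_nonneg _
  have hB0 : 0 ≤ B := integral_nonneg fun x => abs_nonneg _
  set M := max (β₁ / θ) (β₂ / (1 - θ)) with hM
  have hM1 : β₁ ≤ M * θ := by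
    have : β₁ / θ ≤ M := le_max_left _ _
    calc β₁ = (β₁ / θ) * θ := by field_simp
    _ ≤ M * θ := by nlinarith
  have hM2 : β₂ ≤ M * (1 - θ) := by
    have : β₂ / (1 - θ) ≤ M := le_max_right _ _
    calc β₂ = (β₂ / (1 - θ)) * (1 - θ) := by field_simp
    _ ≤ M * (1 - θ) := by nlinarith
  have hM0 : 0 < M := lt_of_lt_of_le (div_pos hβ₁ hθ0) (le_max_left _ _)
  nlinarith [mul_le_mul_of_nonneg_left H1 hθ0.le, mul_le_mul_of_nonneg_left H2 hθ1'.le,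
    mul_nonneg (mul_nonneg hA0 hB0) (mul_nonneg hθ0.le hθ1'.le),
    mul_le_mul_of_nonneg_right hM1 (mul_nonneg (sq_nonneg A) hθ0.le),
    mul_le_mul_of_nonneg_right hM2 (mul_nonneg (sq_nonneg B) hθ1'.le),
    mul_nonneg hM0.le (mul_nonneg (mul_nonneg hA0 hB0) (mul_nonneg hθ0.le hθ1'.le)),
    sq_nonneg (A - B)]
end

section
/- There exists a constant c > 0 such that for every r > 0 and every continuously differentiable function f : ℝ → ℝ, (1/2)·∫₀¹ f(s)² ds + (1/4)·f(0)² + (1/4)·f(1)² ≤ (r/2)·∫₀¹ f'(s)² ds + c·( min(1,r) )^{-1/2} · ( (1/2)·∫₀¹ |f(s)| ds + (1/4)·|f(0)| + (1/4)·|f(1)| )². -/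
open MeasureTheory intervalIntegral

private lemma sticky_ftc {f : ℝ → ℝ} (hf : ContDiff ℝ 1 f) (y x : ℝ) :
    f x - f y = ∫ s in y..x, deriv f s :=
  (intervalIntegral.integral_deriv_eq_sub
      (fun _t _ => (hf.differentiable one_ne_zero).differentiableAt)
      ((hf.continuous_deriv le_rfl).intervalIntegrable y x)).symm

private lemma sticky_sup {f : ℝ → ℝ} (hf : ContDiff ℝ 1 f) {a b x : ℝ}
    (hab : a < b) (hx : x ∈ Set.Icc a b) :
    |f x| ≤ (b - a)⁻¹ * (∫ s in a..b, |f s|) + ∫ s in a..b, |deriv f s| := by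
  have hc : Continuous f := hf.continuous
  have hd : Continuous (deriv f) := hf.continuous_deriv le_rfl
  set D : ℝ := ∫ s in a..b, |deriv f s| with hD
  have hnn : ∀ s : ℝ, 0 ≤ |deriv f s| := fun s => abs_nonneg _
  have key : ∀ y ∈ Set.Icc a b, |f x| ≤ |f y| + D := by
    intro y hy
    have h1 : |f x - f y| ≤ D := by
      rw [sticky_ftc hf y x]
      rcases le_total y x with h | h
      · calc |∫ s in y..x, deriv f s| ≤ ∫ s in y..x, |deriv f s| :=
              intervalIntegral.abs_integral_le_integral_abs h
          _ ≤ D := intervalIntegral.integral_mono_interval hy.1 h hx.2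
              (Filter.Eventually.of_forall hnn) (hd.abs.intervalIntegrable a b)
      · rw [intervalIntegral.integral_symm, abs_neg]
        calc |∫ s in x..y, deriv f s| ≤ ∫ s in x..y, |deriv f s| :=
              intervalIntegral.abs_integral_le_integral_abs h
          _ ≤ D := intervalIntegral.integral_mono_interval hx.1 h hy.2
              (Filter.Eventually.of_forall hnn) (hd.abs.intervalIntegrable a b)
    calc |f x| = |f y + (f x - f y)| := by ring_nf
      _ ≤ |f y| + |f x - f y| := abs_add_le _ _
      _ ≤ |f y| + D := by linarith
  have hmono : (∫ _y in a..b, |f x|) ≤ ∫ y in a..b, (|f y| + D) :=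
    intervalIntegral.integral_mono_on hab.le intervalIntegrable_const
      ((hc.abs.add continuous_const).intervalIntegrable a b) key
  have hL : (∫ _y in a..b, |f x|) = (b - a) * |f x| := by
    simp [intervalIntegral.integral_const, smul_eq_mul]
  have hR : (∫ y in a..b, (|f y| + D)) = (∫ s in a..b, |f s|) + (b - a) * D := by
    rw [intervalIntegral.integral_add (hc.abs.intervalIntegrable a b) intervalIntegrable_const]
    simp [intervalIntegral.integral_const, smul_eq_mul]
  have hba : (0:ℝ) < b - a := by linarith
  have h2 : (b - a) * |f x| ≤ (∫ s in a..b, |f s|) + (b - a) * D := by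
    rw [← hL, ← hR]; exact hmono
  calc |f x| = (b - a)⁻¹ * ((b - a) * |f x|) := by field_simp
    _ ≤ (b - a)⁻¹ * ((∫ s in a..b, |f s|) + (b - a) * D) :=
        mul_le_mul_of_nonneg_left h2 (by positivity)
    _ = (b - a)⁻¹ * (∫ s in a..b, |f s|) + D := by field_simp

private lemma sticky_sq {f : ℝ → ℝ} (hc : Continuous f) {a b M : ℝ} (hab : a ≤ b)
    (hM : ∀ x ∈ Set.Icc a b, |f x| ≤ M) :
    (∫ s in a..b, f s ^ 2) ≤ M * ∫ s in a..b, |f s| := by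
  have h : (∫ s in a..b, f s ^ 2) ≤ ∫ s in a..b, M * |f s| := by
    refine intervalIntegral.integral_mono_on hab ((hc.pow 2).intervalIntegrable a b)
      ((continuous_const.mul hc.abs).intervalIntegrable a b) (fun x hx => ?_)
    nlinarith [hM x hx, abs_nonneg (f x), sq_abs (f x)]
  simpa [intervalIntegral.integral_const_mul] using h

private lemma sticky_cross {g : ℝ → ℝ} (hg : Continuous g) {a b r w : ℝ} (hab : a ≤ b)
    (hr : 0 < r) :
    (∫ s in a..b, |g s|) * w ≤ (r / 2) * (∫ s in a..b, g s ^ 2) + ((b - a) / (2 * r)) * w ^ 2 := by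
  have hpt : ∀ s ∈ Set.Icc a b, |g s| * w ≤ (r / 2) * g s ^ 2 + w ^ 2 / (2 * r) := by
    intro s _
    have h2r : (0:ℝ) < 2 * r := by linarith
    have key : 2 * r * (|g s| * w) ≤ r ^ 2 * g s ^ 2 + w ^ 2 := by
      nlinarith [sq_nonneg (r * |g s| - w), sq_abs (g s)]
    have h3 : |g s| * w ≤ (r ^ 2 * g s ^ 2 + w ^ 2) / (2 * r) := by
      rw [le_div_iff₀ h2r]; linarith
    calc |g s| * w ≤ (r ^ 2 * g s ^ 2 + w ^ 2) / (2 * r) := h3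
      _ = (r / 2) * g s ^ 2 + w ^ 2 / (2 * r) := by field_simp
  have h : (∫ s in a..b, |g s| * w) ≤ ∫ s in a..b, ((r / 2) * g s ^ 2 + w ^ 2 / (2 * r)) :=
    intervalIntegral.integral_mono_on hab ((hg.abs.mul continuous_const).intervalIntegrable a b)
      (((continuous_const.mul (hg.pow 2)).add continuous_const).intervalIntegrable a b) hpt
  have hL : (∫ s in a..b, |g s| * w) = (∫ s in a..b, |g s|) * w :=
    intervalIntegral.integral_mul_const _ _
  have hR : (∫ s in a..b, ((r / 2) * g s ^ 2 + w ^ 2 / (2 * r)))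
      = (r / 2) * (∫ s in a..b, g s ^ 2) + (b - a) * (w ^ 2 / (2 * r)) := by
    rw [intervalIntegral.integral_add (f := fun s => (r / 2) * g s ^ 2) ((continuous_const.mul (hg.pow 2)).intervalIntegrable a b)
      intervalIntegrable_const, intervalIntegral.integral_const_mul]
    simp [intervalIntegral.integral_const, smul_eq_mul, mul_div_assoc]
  rw [hL, hR] at h
  calc (∫ s in a..b, |g s|) * w
      ≤ (r / 2) * (∫ s in a..b, g s ^ 2) + (b - a) * (w ^ 2 / (2 * r)) := h
    _ = (r / 2) * (∫ s in a..b, g s ^ 2) + ((b - a) / (2 * r)) * w ^ 2 := by ring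

set_option maxHeartbeats 1000000

/-- Example 4.1(b), super Poincaré inequality for the sticky-reflected
Brownian motion on `[0,1]` (with `δ = 0`, `γ = 1/2`, `V = W = 0`). -/
theorem sticky_super_poincare_unit_interval :
    ∃ c : ℝ, 0 < c ∧ ∀ r : ℝ, 0 < r → ∀ f : ℝ → ℝ, ContDiff ℝ 1 f →
      (1 / 2) * (∫ s in (0 : ℝ)..1, f s ^ 2) + (1 / 4) * f 0 ^ 2 + (1 / 4) * f 1 ^ 2 ≤
        (r / 2) * (∫ s in (0 : ℝ)..1, deriv f s ^ 2)
          + c * min 1 r ^ (-(1 / 2) : ℝ)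
            * ((1 / 2) * (∫ s in (0 : ℝ)..1, |f s|)
              + (1 / 4) * |f 0| + (1 / 4) * |f 1|) ^ 2 := by
  refine ⟨9, by norm_num, ?_⟩
  intro r hr f hf
  have hc : Continuous f := hf.continuous
  have hd : Continuous (deriv f) := hf.continuous_deriv le_rfl
  -- scalar setup
  set m : ℝ := min 1 r with hm
  have hm0 : 0 < m := lt_min one_pos hr
  have hmr : m ≤ r := min_le_right _ _
  have hm1 : m ≤ 1 := min_le_left _ _
  set q : ℝ := Real.sqrt m with hq
  have hq0 : 0 < q := Real.sqrt_pos.mpr hm0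
  have hq1 : q ≤ 1 := by
    rw [hq, show (1:ℝ) = Real.sqrt 1 by simp]
    exact Real.sqrt_le_sqrt hm1
  have hqq : q * q = m := Real.mul_self_sqrt hm0.le
  have hinvq1 : (1:ℝ) ≤ q⁻¹ := by rw [← one_div, le_div_iff₀ hq0]; linarith
  set n : ℕ := ⌈q⁻¹⌉₊ with hn
  have hn1 : q⁻¹ ≤ (n:ℝ) := Nat.le_ceil _
  have hn0 : (0:ℝ) < n := lt_of_lt_of_le (by linarith) hn1
  have hnpos : 0 < n := by exact_mod_cast hn0
  have hn2 : (n:ℝ) ≤ 2 * q⁻¹ := by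
    have := Nat.ceil_lt_add_one (a := q⁻¹) (by positivity)
    rw [← hn] at this
    linarith
  have hinvn : (n:ℝ)⁻¹ ≤ q := by
    have h := inv_anti₀ (by positivity) hn1
    rwa [inv_inv] at h
  have hrpow : m ^ (-(1/2) : ℝ) = q⁻¹ := by
    rw [Real.rpow_neg hm0.le, hq, Real.sqrt_eq_rpow]
  set cl : ℝ := (n:ℝ)⁻¹ / (2*r) with hcldef
  have hclnn : (0:ℝ) ≤ cl := by rw [hcldef]; positivity
  have hcoef : 2*(n:ℝ) + 10 * cl ≤ 9 * q⁻¹ := by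
    have hqr : q / r ≤ q⁻¹ := by
      rw [div_le_iff₀ hr, inv_mul_eq_div, le_div_iff₀ hq0, hqq]
      exact hmr
    have h1 : (n:ℝ)⁻¹ / r ≤ q / r := by gcongr
    have h2 : 10 * cl = 5 * ((n:ℝ)⁻¹ / r) := by rw [hcldef]; ring
    linarith
  -- partition
  set ψ : ℕ → ℝ := fun k => (k:ℝ) / n with hψ
  have hnne : (n:ℝ) ≠ 0 := hn0.ne'
  have hψ0 : ψ 0 = 0 := by simp [hψ]
  have hψn : ψ n = 1 := by simp only [hψ]; exact div_self hnne
  have hψlt : ∀ k : ℕ, ψ k < ψ (k+1) := by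
    intro k
    simp only [hψ]
    rw [div_lt_div_iff₀ hn0 hn0]
    push_cast
    nlinarith [hn0]
  have hgap : ∀ k : ℕ, ψ (k+1) - ψ k = (n:ℝ)⁻¹ := by
    intro k
    simp only [hψ]
    push_cast
    field_simp
    ring
  have hinvgap : ∀ k : ℕ, (ψ (k+1) - ψ k)⁻¹ = (n:ℝ) := by
    intro k; rw [hgap, inv_inv]
  have hsplit : ∀ g : ℝ → ℝ, Continuous g →
      (∑ k ∈ Finset.range n, ∫ s in ψ k..ψ (k+1), g s) = ∫ s in (0:ℝ)..1, g s := by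
    intro g hg
    have h := intervalIntegral.sum_integral_adjacent_intervals (a := ψ) (μ := volume) (n := n)
      (fun k _ => hg.intervalIntegrable _ _)
    rw [hψ0, hψn] at h
    exact h
  -- pieces
  set L : ℝ := ∫ s in (0:ℝ)..1, |f s| with hLdef
  set E : ℝ := ∫ s in (0:ℝ)..1, deriv f s ^ 2 with hEdef
  have hsumb : (∑ k ∈ Finset.range n, ∫ s in ψ k..ψ (k+1), |f s|) = L := hsplit _ hc.abs
  have hsume : (∑ k ∈ Finset.range n, ∫ s in ψ k..ψ (k+1), deriv f s ^ 2) = E :=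
    hsplit _ (hd.pow 2)
  have hbnn : ∀ k : ℕ, 0 ≤ ∫ s in ψ k..ψ (k+1), |f s| := fun k =>
    intervalIntegral.integral_nonneg (hψlt k).le (fun u _ => abs_nonneg _)
  have henn : ∀ k : ℕ, 0 ≤ ∫ s in ψ k..ψ (k+1), deriv f s ^ 2 := fun k =>
    intervalIntegral.integral_nonneg (hψlt k).le (fun u _ => sq_nonneg _)
  have hbL : ∀ k ∈ Finset.range n, (∫ s in ψ k..ψ (k+1), |f s|) ≤ L := by
    intro k hk
    rw [← hsumb]
    exact Finset.single_le_sum (fun i _ => hbnn i) hk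
  have heE : ∀ k ∈ Finset.range n, (∫ s in ψ k..ψ (k+1), deriv f s ^ 2) ≤ E := by
    intro k hk
    rw [← hsume]
    exact Finset.single_le_sum (fun i _ => henn i) hk
  have hLnn : 0 ≤ L := by
    rw [← hsumb]; exact Finset.sum_nonneg (fun i _ => hbnn i)
  -- sup bound on each subinterval
  have hsupk : ∀ k : ℕ, ∀ x ∈ Set.Icc (ψ k) (ψ (k+1)),
      |f x| ≤ (n:ℝ) * (∫ s in ψ k..ψ (k+1), |f s|) + ∫ s in ψ k..ψ (k+1), |deriv f s| := by
    intro k x hx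
    have h := sticky_sup hf (hψlt k) hx
    rwa [hinvgap k] at h
  -- cross-term estimate on each subinterval
  have hcrossk : ∀ k : ℕ, ∀ w : ℝ,
      (∫ s in ψ k..ψ (k+1), |deriv f s|) * w ≤
        (r/2) * (∫ s in ψ k..ψ (k+1), deriv f s ^ 2) + cl * w ^ 2 := by
    intro k w
    have h := sticky_cross hd (hψlt k).le hr (w := w)
    rw [hgap k] at h
    rwa [← hcldef] at h
  -- bulk estimate
  have key1 : ∀ k ∈ Finset.range n, (∫ s in ψ k..ψ (k+1), f s ^ 2)
      ≤ (r/2) * (∫ s in ψ k..ψ (k+1), deriv f s ^ 2)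
        + ((n:ℝ) * L + cl * L) * (∫ s in ψ k..ψ (k+1), |f s|) := by
    intro k hk
    set bk : ℝ := ∫ s in ψ k..ψ (k+1), |f s| with hbk
    set dk : ℝ := ∫ s in ψ k..ψ (k+1), |deriv f s| with hdk
    have h1 : (∫ s in ψ k..ψ (k+1), f s ^ 2) ≤ ((n:ℝ) * bk + dk) * bk :=
      sticky_sq hc (hψlt k).le (hsupk k)
    have h2 := hcrossk k bk
    have h3 : bk * bk ≤ L * bk := mul_le_mul_of_nonneg_right (hbL k hk) (hbnn k)
    have h5 := mul_le_mul_of_nonneg_left h3 hn0.le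
    have h6 := mul_le_mul_of_nonneg_left h3 hclnn
    linarith [h1, h2, h5, h6]
  -- summed bulk estimate
  have hsumf2 : (∫ s in (0:ℝ)..1, f s ^ 2)
      ≤ (r/2) * E + ((n:ℝ) * L + cl * L) * L := by
    have h := Finset.sum_le_sum key1
    rw [hsplit (fun s => f s ^ 2) (hc.pow 2)] at h
    rw [Finset.sum_add_distrib, ← Finset.mul_sum, ← Finset.mul_sum, hsumb, hsume] at h
    exact h
  -- boundary estimates
  have hbd0 : |f 0| * |f 0| ≤ (n:ℝ) * (L * |f 0|) + ((r/2) * E + cl * (|f 0| * |f 0|)) := by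
    have h0mem : (0:ℝ) ∈ Set.Icc (ψ 0) (ψ 1) := by
      rw [hψ0]; exact ⟨le_refl _, (by linarith [hψlt 0, hψ0] : (0:ℝ) ≤ ψ 1)⟩
    have hsup0 := hsupk 0 0 h0mem
    have h1 := mul_le_mul_of_nonneg_right hsup0 (abs_nonneg (f 0))
    have h2 := hcrossk 0 (|f 0|)
    have h0r : 0 ∈ Finset.range n := Finset.mem_range.mpr hnpos
    have h3 := mul_le_mul_of_nonneg_right (hbL 0 h0r) (abs_nonneg (f 0))
    have h4 := heE 0 h0r
    have h5 := mul_le_mul_of_nonneg_left h3 hn0.le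
    have h6 := mul_le_mul_of_nonneg_left h4 (by positivity : (0:ℝ) ≤ r/2)
    linarith [h1, h2, h5, h6]
  obtain ⟨p, hp⟩ : ∃ p, n = p + 1 := ⟨n - 1, (Nat.succ_pred_eq_of_pos hnpos).symm⟩
  have hbd1 : |f 1| * |f 1| ≤ (n:ℝ) * (L * |f 1|) + ((r/2) * E + cl * (|f 1| * |f 1|)) := by
    have hψp1 : ψ (p+1) = 1 := by rw [← hp, hψn]
    have h1mem : (1:ℝ) ∈ Set.Icc (ψ p) (ψ (p+1)) := by
      constructor
      · rw [← hψp1]; exact (hψlt p).le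
      · rw [hψp1]
    have hsup1 := hsupk p 1 h1mem
    have h1 := mul_le_mul_of_nonneg_right hsup1 (abs_nonneg (f 1))
    have h2 := hcrossk p (|f 1|)
    have hpr : p ∈ Finset.range n := Finset.mem_range.mpr (by omega)
    have h3 := mul_le_mul_of_nonneg_right (hbL p hpr) (abs_nonneg (f 1))
    have h4 := heE p hpr
    have h5 := mul_le_mul_of_nonneg_left h3 hn0.le
    have h6 := mul_le_mul_of_nonneg_left h4 (by positivity : (0:ℝ) ≤ r/2)
    linarith [h1, h2, h5, h6]
  -- final assembly
  rw [hrpow]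
  clear_value m q n cl L E
  set F0 : ℝ := |f 0| with hF0def
  set F1 : ℝ := |f 1| with hF1def
  set U : ℝ := 1/2 * L + 1/4 * F0 + 1/4 * F1 with hUdef
  clear_value F0 F1 U
  have hF0nn : 0 ≤ F0 := by rw [hF0def]; positivity
  have hF1nn : 0 ≤ F1 := by rw [hF1def]; positivity
  have hUnn : 0 ≤ U := by rw [hUdef]; positivity
  have hL2U : L ≤ 2 * U := by rw [hUdef]; linarith
  have hF04U : F0 ≤ 4 * U := by rw [hUdef]; linarith
  have hF14U : F1 ≤ 4 * U := by rw [hUdef]; linarith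
  -- n*L*U bound
  have hnLU : (n:ℝ) * (L * U) ≤ (n:ℝ) * (2 * (U * U)) := by
    apply mul_le_mul_of_nonneg_left ?_ hn0.le
    calc L * U ≤ (2*U) * U := mul_le_mul_of_nonneg_right hL2U hUnn
      _ = 2 * (U * U) := by ring
  have hnLUeq : (n:ℝ) * (L * U)
      = 1/2 * ((n:ℝ) * L * L) + 1/4 * ((n:ℝ) * (L * F0)) + 1/4 * ((n:ℝ) * (L * F1)) := by
    rw [hUdef]; ring
  have hsqsum : 1/2 * (L*L) + 1/4 * (F0*F0) + 1/4 * (F1*F1) ≤ 10 * (U*U) := by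
    have hA := mul_le_mul hL2U hL2U hLnn (by linarith : (0:ℝ) ≤ 2*U)
    have hB := mul_le_mul hF04U hF04U hF0nn (by linarith : (0:ℝ) ≤ 4*U)
    have hC := mul_le_mul hF14U hF14U hF1nn (by linarith : (0:ℝ) ≤ 4*U)
    linarith [hA, hB, hC]
  have hsqsum' : cl * (1/2 * (L*L) + 1/4 * (F0*F0) + 1/4 * (F1*F1))
      ≤ cl * (10 * (U*U)) := mul_le_mul_of_nonneg_left hsqsum hclnn
  have hcoefU : (2*(n:ℝ) + 10 * cl) * (U*U) ≤ (9 * q⁻¹) * (U*U) :=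
    mul_le_mul_of_nonneg_right hcoef (mul_self_nonneg U)
  have hsq0 : f 0 ^ 2 = F0 * F0 := by rw [hF0def, ← sq_abs]; ring
  have hsq1 : f 1 ^ 2 = F1 * F1 := by rw [hF1def, ← sq_abs]; ring
  rw [hsq0, hsq1]
  have hgoal : (9:ℝ) * q⁻¹ * U ^ 2 = (9 * q⁻¹) * (U * U) := by ring
  linarith [hsumf2, hbd0, hbd1, hnLU, hnLUeq, hsqsum', hcoefU, hgoal]
end
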